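/- Uniform-distribution bound on the continued moments: Let a > 0. For every integer ℓ ≥ 1 the function B_ℓ(z) = (1/(2a))∫_{−a}^a (λ − z)^{−ℓ} dλ, defined for Im z > 0, extends holomorphically to ℂ₊ ∪ {z ∈ ℂ : Re z ∈ (−a, a)}; moreover, if δ satisfies 1 ≤ δ ≤ a and δ(log δ + π) ≤ a, then this extension B̃_ℓ satisfies |B̃_ℓ(z)| ≤ δ^{−ℓ} for every integer ℓ ≥ 1 and every z with Re z ∈ (−a, a), |z − a| ≥ δ and |z + a| ≥ δ. -/

import Mathlib

open MeasureTheory Complex Metric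

noncomputable section

/-- The lattice `ℤ^d`. -/
abbrev Zd (d : ℕ) := Fin d → ℤ

/-- The Hilbert space `ℓ²(ℤ^d)` of square-summable complex functions. -/
abbrev ellTwo (d : ℕ) := lp (fun _ : Zd d => ℂ) 2

/-- `n` and `m` are nearest neighbours in `ℤ^d`: they differ by `1` in exactly one
coordinate and agree in all others, i.e. `∑ i |nᵢ - mᵢ| = 1`. -/
def NN {d : ℕ} (n m : Zd d) : Prop := (∑ i, |n i - m i|) = 1

/-- The (finite) set of nearest neighbours of `n` in `ℤ^d`. -/
def nbrs {d : ℕ} (n : Zd d) : Finset (Zd d) :=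
  Finset.univ.image fun p : Fin d × Bool =>
    Function.update n p.1 (n p.1 + if p.2 then 1 else -1)

/-- The matrix element `A(n,m) = ⟨δ_n, A δ_m⟩` of a bounded operator on `ℓ²(ℤ^d)`. -/
def entry {d : ℕ} (A : ellTwo d →L[ℂ] ellTwo d) (n m : Zd d) : ℂ :=
  A (lp.single 2 m 1) n

/-- `Γ_k(n,m)`: paths of length `k` in `ℤ^d` from `n` to `m`. -/
def pathSet (d k : ℕ) (n m : Zd d) : Set (Fin (k+1) → Zd d) :=
  {γ | γ 0 = n ∧ γ (Fin.last k) = m ∧ ∀ j : Fin k, NN (γ j.castSucc) (γ j.succ)}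

/-- `ν(γ,α)`: the number of indices `j ∈ {0,…,k}` with `γ_j = α`. -/
def nu {d k : ℕ} (γ : Fin (k+1) → Zd d) (α : Zd d) : ℕ :=
  (Finset.univ.filter fun j => γ j = α).card

/-- `B_ℓ(z) = ∫ (λ - z)^{-ℓ} dμ(λ)`. -/
def B (μ : Measure ℝ) (ℓ : ℕ) (z : ℂ) : ℂ := ∫ lam, ((lam : ℂ) - z)⁻¹ ^ ℓ ∂μ

/-- `O_ρ = {z ∈ ℂ : dist(z, (a,b)) < ρ}`. -/
def Odist (a b ρ : ℝ) : Set ℂ := {z | Metric.infDist z (Complex.ofReal '' Set.Ioo a b) < ρ}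

/-- The Euclidean norm of a lattice point `x ∈ ℤ^d ⊂ ℝ^d`. -/
def eucNorm {d : ℕ} (x : Zd d) : ℝ := Real.sqrt (∑ i, ((x i : ℝ))^2)

/-- `Γ_{k,ℓ}(n,m)`: two-block paths `(n₀,…,n_k,m₀,…,m_ℓ,m_{ℓ+1})` with `n₀ = n`,
`m_{ℓ+1} = m`, nearest-neighbour steps within each block, `|n_k - m₀| ≤ R` and
`|m_ℓ - m_{ℓ+1}| ≤ R`. -/
def pathSet2 (d : ℕ) (R : ℝ) (k l : ℕ) (n m : Zd d) :
    Set ((Fin (k+1) → Zd d) × (Fin (l+2) → Zd d)) :=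
  {γ | γ.1 0 = n ∧ γ.2 (Fin.last (l+1)) = m ∧
    (∀ i : Fin k, NN (γ.1 i.castSucc) (γ.1 i.succ)) ∧
    (∀ j : Fin l, NN (γ.2 j.castSucc.castSucc) (γ.2 j.succ.castSucc)) ∧
    eucNorm (γ.1 (Fin.last k) - γ.2 0) ≤ R ∧
    eucNorm (γ.2 (Fin.last l).castSucc - γ.2 (Fin.last (l+1))) ≤ R}

/-- `ν₂(γ,α)` for the second block: the number of indices `j ∈ {0,…,ℓ}` with `m_j = α`. -/
def nu2 {d l : ℕ} (γ₂ : Fin (l+2) → Zd d) (α : Zd d) : ℕ :=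
  (Finset.univ.filter fun j : Fin (l+1) => γ₂ j.castSucc = α).card

/-- `B_{k,ℓ}(z₁,z₂) = ∫ (λ-z₁)^{-k} (λ-z₂)^{-ℓ} dμ(λ)`. -/
def B2 (μ : Measure ℝ) (k l : ℕ) (p : ℂ × ℂ) : ℂ :=
  ∫ lam, ((lam : ℂ) - p.1)⁻¹ ^ k * ((lam : ℂ) - p.2)⁻¹ ^ l ∂μ

/-- `{z ∈ ℂ : dist(z, [a,b]) < ρ}`. -/
def OdistI (a b ρ : ℝ) : Set ℂ := {z | Metric.infDist z (Complex.ofReal '' Set.Icc a b) < ρ}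

section UMBHelpers
open Real
set_option maxHeartbeats 1000000

lemma umb_log_le_div_e {x : ℝ} (hx : 0 < x) : Real.log x ≤ x / Real.exp 1 := by
  have h := Real.log_le_sub_one_of_pos (show 0 < x / Real.exp 1 by positivity)
  rw [Real.log_div hx.ne' (Real.exp_ne_zero 1), Real.log_exp] at h
  linarith

lemma umb_one_add_sq_le_exp (s : ℝ) (hs : 0 ≤ s) : 1 + s^2 ≤ Real.exp s := by
  have h1 : 1 + s/6 ≤ Real.exp (s/6) := by have := Real.add_one_le_exp (s/6); linarith
  have h2 : (1 + s/6)^6 ≤ (Real.exp (s/6))^6 := by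
    apply pow_le_pow_left₀ (by linarith) h1
  have h3 : (Real.exp (s/6))^6 = Real.exp s := by
    rw [← Real.exp_nat_mul]; ring_nf
  nlinarith [mul_nonneg hs (sq_nonneg (s - 63/20)), sq_nonneg s, pow_nonneg hs 4, pow_nonneg hs 5, pow_nonneg hs 6]

lemma umb_log_one_add_sq {s : ℝ} (hs : 0 ≤ s) : Real.log (1 + s^2) ≤ s := by
  rw [Real.log_le_iff_le_exp (by positivity)]
  exact umb_one_add_sq_le_exp s hs

lemma umb_arctan_ge_half {s : ℝ} (h0 : 0 ≤ s) (h1 : s ≤ 1) : s/2 ≤ Real.arctan s := by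
  have hpi : (2:ℝ) < π := by linarith [Real.pi_gt_d6]
  have htan : Real.tan (s/2) ≤ s := by
    rw [Real.tan_eq_sin_div_cos]
    have hsin : Real.sin (s/2) ≤ s/2 := Real.sin_le (by linarith)
    have hcos : (7:ℝ)/8 ≤ Real.cos (s/2) := by
      have := Real.one_sub_sq_div_two_le_cos (x := s/2)
      nlinarith
    have hsin0 : 0 ≤ Real.sin (s/2) := Real.sin_nonneg_of_nonneg_of_le_pi (by linarith) (by nlinarith)
    rw [div_le_iff₀ (by linarith)] at *
    calc Real.sin (s/2) ≤ s/2 := hsin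
    _ ≤ s * Real.cos (s/2) := by nlinarith
  calc s/2 = Real.arctan (Real.tan (s/2)) := (Real.arctan_tan (by linarith) (by nlinarith)).symm
  _ ≤ Real.arctan s := Real.arctan_strictMono.monotone htan


lemma umb_exp3 : (20:ℝ) ≤ Real.exp 3 := by
  have h := Real.exp_one_gt_d9
  have h3 : Real.exp 3 = (Real.exp 1)^3 := by rw [← Real.exp_nat_mul]; norm_num
  have h4 : (2.7182818283:ℝ)^3 ≤ (Real.exp 1)^3 := by
    apply pow_le_pow_left₀ (by norm_num) h.le
  rw [h3]; nlinarith

lemma umb_log_le_aux {x : ℝ} (hx : 0 < x) : Real.log x ≤ x / Real.exp 3 + 2 := by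
  have h := Real.log_le_sub_one_of_pos (show 0 < x / Real.exp 3 by positivity)
  rw [Real.log_div hx.ne' (Real.exp_ne_zero 3), Real.log_exp] at h
  linarith

-- log(1+4π²) ≤ 4.1  (so K := ½log(1+4π²) ≤ 2.05)
lemma umb_K_bound : Real.log (1 + 4*π^2) ≤ 41/10 := by
  have hπ : π < 3.1416 := Real.pi_lt_d6.trans (by norm_num)
  have hπ0 := Real.pi_pos
  have h1 : (1:ℝ) + 4*π^2 ≤ 40.48 := by nlinarith
  have h2 : Real.log (1 + 4*π^2) ≤ Real.log 40.48 :=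
    Real.log_le_log (by positivity) h1
  have h3 := umb_log_le_aux (show (0:ℝ) < 40.48 by norm_num)
  have h4 : (40.48:ℝ) / Real.exp 3 ≤ 40.48/20 := by
    gcongr; exact umb_exp3
  linarith

-- poly lemma
lemma umb_poly {q : ℝ} (hq : 6/5 ≤ q) : (8*q - 7987/1000)^2 ≤ (π/4) * q^8 + π^2/4 := by
  have hπ : (3.1415:ℝ) ≤ π := by linarith [Real.pi_gt_d6]
  have h1 : (8*q - 7987/1000)^2 ≤ (31415/40000) * q^8 + (3.1415)^2/4 := by
    nlinarith [sq_nonneg (q - 6/5), sq_nonneg (q^2 - 36/25), sq_nonneg (q^4 - 2), sq_nonneg (q^3 - 2*q), pow_nonneg (by linarith : (0:ℝ) ≤ q) 4, sq_nonneg (q^4 - 8*q + 6)]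
  have h2 : (31415/40000 : ℝ) * q^8 ≤ (π/4) * q^8 := by
    have : (0:ℝ) ≤ q^8 := by positivity
    nlinarith
  nlinarith [sq_nonneg π]

-- for t ≥ 2π:  (log(1+t))² + π² ≤ t²
lemma umb_case1 {t : ℝ} (ht : 2*π ≤ t) : (Real.log (1+t))^2 + π^2 ≤ t^2 := by
  have hπ : (3.1415:ℝ) ≤ π := by linarith [Real.pi_gt_d6]
  have he : (2.7182:ℝ) ≤ Real.exp 1 := by linarith [Real.exp_one_gt_d9]
  have ht0 : (0:ℝ) < 1 + t := by linarith
  have h1 : Real.log (1+t) ≤ (1+t)/Real.exp 1 := by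
    have h := Real.log_le_sub_one_of_pos (show 0 < (1+t) / Real.exp 1 by positivity)
    rw [Real.log_div ht0.ne' (Real.exp_ne_zero 1), Real.log_exp] at h
    linarith
  have h2 : (1+t)/Real.exp 1 ≤ (1+t)/(27182/10000) := by
    gcongr
    linarith
  have hπu : π ≤ 3.1416 := Real.pi_lt_d6.le.trans (by norm_num)
  have h12 : Real.log (1+t) ≤ (1+t)/(27182/10000) := h1.trans h2
  have h3 : Real.log (1+t) ≤ t - π := by nlinarith [h12]
  have h4 : 0 ≤ Real.log (1+t) := Real.log_nonneg (by linarith)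
  nlinarith



lemma umb_arctan_pos {x : ℝ} (hx : 0 < x) : 0 < Real.arctan x := by
  have := Real.arctan_strictMono hx
  rwa [Real.arctan_zero] at this

lemma umb_core_neg {a δ u u' v : ℝ} (ha : 0 < a) (hδ : 1 ≤ δ) (hu : 0 < u) (huu : u ≤ u')
    (hv : 0 < v) (hsum : u + u' = 2*a) (hm : δ ≤ Real.sqrt (u^2+v^2)) (hπa : δ * π ≤ a) :
    ((Real.log (u'^2+v^2) - Real.log (u^2+v^2))/2)^2
      + (π + Real.arctan (v/u) + Real.arctan (v/u'))^2 ≤ (2*a/δ)^2 := by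
  have hπ15 : (3.1415:ℝ) ≤ π := by linarith [Real.pi_gt_d6]
  have hπ16 : π ≤ 3.1416 := by linarith [Real.pi_lt_d6]
  have hδ0 : (0:ℝ) < δ := by linarith
  have hu' : 0 < u' := lt_of_lt_of_le hu huu
  have hA : (0:ℝ) < u^2+v^2 := by positivity
  have hA' : (0:ℝ) < u'^2+v^2 := by positivity
  set r : ℝ := (Real.log (u'^2+v^2) - Real.log (u^2+v^2))/2 with hrdef
  set θ : ℝ := π + Real.arctan (v/u) + Real.arctan (v/u') with hθdef
  set t : ℝ := 2*a/δ with htdef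
  have hr0 : 0 ≤ r := by
    have : Real.log (u^2+v^2) ≤ Real.log (u'^2+v^2) :=
      Real.log_le_log hA (by nlinarith)
    simp only [hrdef]; linarith
  have ht2π : 2*π ≤ t := by
    rw [htdef, le_div_iff₀ hδ0]; nlinarith
  have hθπ : π < θ := by
    have h1 := umb_arctan_pos (show 0 < v/u by positivity)
    have h2 := umb_arctan_pos (show 0 < v/u' by positivity)
    simp only [hθdef]; linarith
  have hθ2π : θ < 2*π := by
    have h1 := Real.arctan_lt_pi_div_two (v/u)
    have h2 := Real.arctan_lt_pi_div_two (v/u')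
    simp only [hθdef]; linarith
  set X : ℝ := Real.arctan (u'/v) with hXdef
  have hXpos : 0 < X := umb_arctan_pos (by positivity)
  have hX : X ≤ 2*π - θ := by
    have e1 : Real.arctan ((v/u')⁻¹) = π/2 - Real.arctan (v/u') :=
      Real.arctan_inv_of_pos (by positivity)
    rw [inv_div] at e1
    have h1 := Real.arctan_lt_pi_div_two (v/u)
    simp only [hXdef, hθdef]; linarith
  have hXt : X ≤ t - θ := by linarith
  -- bound log A' - log A ≤ log (1 + (u'/v)^2)
  have hvv : v^2 ≤ u^2 + v^2 := by nlinarith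
  have hlogs : Real.log (u'^2+v^2) - Real.log (u^2+v^2) ≤ Real.log (1 + (u'/v)^2) := by
    have h1 : Real.log (v^2) ≤ Real.log (u^2+v^2) := Real.log_le_log (by positivity) hvv
    have h2 : Real.log (u'^2+v^2) - Real.log (v^2) = Real.log ((u'^2+v^2)/v^2) :=
      (Real.log_div hA'.ne' (by positivity)).symm
    have h3 : (u'^2+v^2)/v^2 = 1 + (u'/v)^2 := by field_simp; ring
    rw [h3] at h2
    linarith
  have hsuff : r^2 ≤ (t - θ) * (t + θ) → r^2 + θ^2 ≤ t^2 := by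
    intro h; nlinarith
  apply hsuff
  by_cases hcase : u' ≤ 2*π*v
  · -- Case A
    set s : ℝ := u'/v with hsdef
    have hs0 : 0 < s := by positivity
    have hs2π : s ≤ 2*π := by rw [hsdef, div_le_iff₀ hv]; linarith
    have hrs : r ≤ s/2 := by
      have := umb_log_one_add_sq hs0.le
      simp only [hrdef]; linarith
    have hrK : r ≤ 2.05 := by
      have h1 : Real.log (1 + s^2) ≤ Real.log (1 + 4*π^2) :=
        Real.log_le_log (by positivity) (by nlinarith)
      have := umb_K_bound
      simp only [hrdef]; linarith
    have h3π : 3*π ≤ t + θ := by linarith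
    have hkey : r^2 ≤ X * (3*π) := by
      rcases le_or_gt s 1 with hs1 | hs1
      · have hX2 : s/2 ≤ X := umb_arctan_ge_half hs0.le hs1
        nlinarith
      · have hX2 : π/4 ≤ X := by
          rw [hXdef, ← Real.arctan_one]
          exact Real.arctan_strictMono.monotone (by linarith)
        nlinarith
    calc r^2 ≤ X * (3*π) := hkey
    _ ≤ (t - θ) * (t + θ) := by
      apply mul_le_mul hXt h3π (by positivity) (by linarith)
  · -- Case B
    push_neg at hcase
    have hX2 : π/4 ≤ X := by
      rw [hXdef, ← Real.arctan_one]
      apply Real.arctan_strictMono.monotone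
      rw [le_div_iff₀ hv]; nlinarith
    set m : ℝ := Real.sqrt (u^2+v^2) with hmdef
    have hm0 : 0 < m := Real.sqrt_pos.mpr hA
    set w : ℝ := u'/m with hwdef
    have hw0 : 0 < w := by positivity
    have hwt : w ≤ t := by
      rw [hwdef, htdef, div_le_div_iff₀ hm0 hδ0]
      have : δ * u' ≤ m * u' := by nlinarith
      nlinarith
    have hlogm : Real.log m = Real.log (u^2+v^2) / 2 := Real.log_sqrt hA.le
    have hrw : r ≤ Real.log w + 13/1000 := by
      have hb : u'^2+v^2 ≤ u'^2 * (1 + 1/(4*π^2)) := by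
        have hv2 : v^2 * (4*π^2) ≤ u'^2 := by
          have h := mul_self_le_mul_self (by positivity : (0:ℝ) ≤ 2*π*v) hcase.le
          nlinarith [h]
        have hpos : (0:ℝ) < 4*π^2 := by positivity
        have hb2 : v^2 ≤ u'^2/(4*π^2) := by rw [le_div_iff₀ hpos]; exact hv2
        calc u'^2+v^2 ≤ u'^2 + u'^2/(4*π^2) := by linarith
        _ = u'^2 * (1 + 1/(4*π^2)) := by ring
      have h1 : Real.log (u'^2+v^2) ≤ Real.log (u'^2) + Real.log (1 + 1/(4*π^2)) := by
        have := Real.log_le_log hA' hb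
        rwa [Real.log_mul (by positivity) (by positivity)] at this
      have h2 : Real.log (1 + 1/(4*π^2)) ≤ 1/(4*π^2) := by
        have := Real.log_le_sub_one_of_pos (show (0:ℝ) < 1 + 1/(4*π^2) by positivity)
        linarith
      have h3 : (1:ℝ)/(4*π^2) ≤ 26/1000 := by
        rw [div_le_iff₀ (by positivity)]; nlinarith
      have h4 : Real.log (u'^2) = 2 * Real.log u' := by
        rw [show u'^2 = u'*u' by ring, Real.log_mul hu'.ne' hu'.ne']; ring
      have h5 : Real.log w = Real.log u' - Real.log m := Real.log_div hu'.ne' hm0.ne'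
      simp only [hrdef]
      rw [hlogm] at h5
      linarith
    have hθt : w + π ≤ t + θ := by linarith
    rcases le_or_gt w (2*π) with hw2π | hw2π
    · -- B1
      have h1 : Real.log w ≤ Real.log (2*π) := Real.log_le_log hw0 hw2π
      have h2 : Real.log (2*π) ≤ 2*π/Real.exp 1 := umb_log_le_div_e (by positivity)
      have he : (2.7182:ℝ) ≤ Real.exp 1 := by linarith [Real.exp_one_gt_d9]
      have h3 : 2*π/Real.exp 1 ≤ 2312/1000 := by
        rw [div_le_iff₀ (Real.exp_pos 1)]
        linarith [he, hπ16]
      have hr : r ≤ 2325/1000 := by linarith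
      have hπsq : (9.86:ℝ) ≤ π^2 := by
        have h := pow_le_pow_left₀ (by norm_num : (0:ℝ) ≤ 3.1415) hπ15 2
        norm_num at h; linarith
      have hkey : r^2 ≤ (π/4) * (3*π) := by
        have h4 : r^2 ≤ (2325/1000:ℝ)^2 := pow_le_pow_left₀ hr0 hr 2
        norm_num at h4; nlinarith [hπsq]
      have h3π : 3*π ≤ t + θ := by linarith
      calc r^2 ≤ (π/4) * (3*π) := hkey
      _ ≤ X * (3*π) := mul_le_mul_of_nonneg_right hX2 (by positivity)
      _ ≤ (t - θ) * (t + θ) := mul_le_mul hXt h3π (by positivity) (by linarith)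
    · -- B2
      set q : ℝ := w ^ ((1:ℝ)/8) with hqdef
      have hq0 : 0 < q := Real.rpow_pos_of_pos hw0 _
      have hq8 : q^(8:ℕ) = w := by
        rw [hqdef, ← Real.rpow_natCast (w ^ ((1:ℝ)/8)) 8, ← Real.rpow_mul hw0.le]
        norm_num
      have hlogq : Real.log q = Real.log w / 8 := by
        rw [hqdef, Real.log_rpow hw0]; ring
      have hq : 6/5 ≤ q := by
        by_contra hq'
        push_neg at hq'
        have : q^(8:ℕ) < (6/5:ℝ)^(8:ℕ) := by
          apply pow_lt_pow_left₀ hq' hq0.le (by norm_num)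
        rw [hq8] at this
        norm_num at this
        linarith
      have hlq : Real.log q ≤ q - 1 := Real.log_le_sub_one_of_pos hq0
      have hr : r ≤ 8*q - 7987/1000 := by
        have : Real.log w ≤ 8*q - 8 := by rw [show Real.log w = 8 * Real.log q by rw [hlogq]; ring]; linarith
        linarith
      have hpoly := umb_poly hq
      have hkey : r^2 ≤ (π/4) * (w + π) := by
        have h1 : r^2 ≤ (8*q - 7987/1000)^2 := by
          apply sq_le_sq' (by linarith) hr
        have h2 : (π/4) * q^8 + π^2/4 = (π/4) * (w + π) := by
          rw [← hq8]; push_cast; ring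
        linarith
      calc r^2 ≤ (π/4) * (w + π) := hkey
      _ ≤ X * (w + π) := mul_le_mul_of_nonneg_right hX2 (by positivity)
      _ ≤ (t - θ) * (t + θ) := mul_le_mul hXt hθt (by positivity) (by linarith)

end UMBHelpers

set_option maxHeartbeats 1000000

noncomputable def umbBt (a : ℝ) (ℓ : ℕ) : ℂ → ℂ :=
  if ℓ = 1 then fun z =>
    (2*(a:ℂ))⁻¹ * (Complex.log ((a:ℂ) - z) + Real.pi * Complex.I - Complex.log (z + (a:ℂ)))
  else fun z => (2*(a:ℂ))⁻¹ * (((-(a:ℝ) : ℝ):ℂ) - z)^((1:ℤ) - (ℓ:ℤ)) / ((ℓ:ℂ) - 1)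
       - (2*(a:ℂ))⁻¹ * (((a:ℝ):ℂ) - z)^((1:ℤ) - (ℓ:ℤ)) / ((ℓ:ℂ) - 1)

lemma umb_slit (a : ℝ) (ha : 0 < a) {z : ℂ}
    (hz : z ∈ ({z : ℂ | 0 < z.im} ∪ {z : ℂ | z.re ∈ Set.Ioo (-a) a})) :
    ((a:ℂ) - z) ∈ Complex.slitPlane ∧ (z + (a:ℂ)) ∈ Complex.slitPlane := by
  rcases hz with hz | hz
  · simp only [Set.mem_setOf_eq] at hz
    constructor
    · exact Or.inr (by simp [Complex.sub_im]; linarith)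
    · exact Or.inr (by simp [Complex.add_im]; linarith)
  · simp only [Set.mem_setOf_eq, Set.mem_Ioo] at hz
    constructor
    · exact Or.inl (by simp [Complex.sub_re]; linarith [hz.2])
    · exact Or.inl (by simp [Complex.add_re]; linarith [hz.1])

lemma umb_ne (a : ℝ) (ha : 0 < a) {z : ℂ}
    (hz : z ∈ ({z : ℂ | 0 < z.im} ∪ {z : ℂ | z.re ∈ Set.Ioo (-a) a})) :
    ((a:ℂ) - z) ≠ 0 ∧ ((-(a:ℝ) : ℝ):ℂ) - z ≠ 0 := by
  obtain ⟨h1, h2⟩ := umb_slit a ha hz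
  refine ⟨Complex.slitPlane_ne_zero h1, ?_⟩
  intro h
  apply Complex.slitPlane_ne_zero h2
  have : z = ((-(a:ℝ) : ℝ):ℂ) := by linear_combination -h
  rw [this]
  push_cast
  ring

lemma umb_diff (a : ℝ) (ha : 0 < a) (ℓ : ℕ) (hℓ : 1 ≤ ℓ) :
    DifferentiableOn ℂ (umbBt a ℓ)
      ({z : ℂ | 0 < z.im} ∪ {z : ℂ | z.re ∈ Set.Ioo (-a) a}) := by
  intro z hz
  apply DifferentiableAt.differentiableWithinAt
  obtain ⟨hs1, hs2⟩ := umb_slit a ha hz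
  obtain ⟨hn1, hn2⟩ := umb_ne a ha hz
  by_cases h1 : ℓ = 1
  · subst h1
    unfold umbBt
    rw [if_pos rfl]
    apply DifferentiableAt.const_mul
    apply DifferentiableAt.sub
    · apply DifferentiableAt.add_const
      exact (Complex.differentiableAt_log hs1).comp z ((differentiableAt_const _).sub differentiableAt_id)
    · exact (Complex.differentiableAt_log hs2).comp z (differentiableAt_id.add_const _)
  · unfold umbBt
    rw [if_neg h1]
    apply DifferentiableAt.sub <;>
    · apply DifferentiableAt.div_const
      apply DifferentiableAt.const_mul
      apply DifferentiableAt.zpow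
      · exact (differentiableAt_const _).sub differentiableAt_id
      · exact Or.inl (by assumption)

lemma umb_ne' {z : ℂ} (hz : 0 < z.im) (lam : ℝ) : ((lam:ℂ) - z) ≠ 0 := by
  intro h
  have := congrArg Complex.im h
  simp [Complex.sub_im] at this
  linarith

lemma umb_intable {z : ℂ} (hz : 0 < z.im) (ℓ : ℕ) (a : ℝ) :
    IntervalIntegrable (fun lam : ℝ => ((lam:ℂ) - z)⁻¹ ^ ℓ) volume (-a) a := by
  apply Continuous.intervalIntegrable
  exact ((Complex.continuous_ofReal.sub continuous_const).inv₀ (umb_ne' hz)).pow ℓ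

lemma umb_int (a : ℝ) (ha : 0 < a) (ℓ : ℕ) (hℓ : 1 ≤ ℓ) (z : ℂ) (hz : 0 < z.im) :
    umbBt a ℓ z = (1 / (2 * (a:ℂ))) * ∫ lam in (-a)..a, ((lam : ℂ) - z)⁻¹ ^ ℓ := by
  have hslit : ∀ lam : ℝ, ((lam:ℂ) - z) ∈ Complex.slitPlane := fun lam =>
    Or.inr (by simp [Complex.sub_im]; linarith)
  by_cases h1 : ℓ = 1
  · subst h1
    have hF : ∀ lam ∈ Set.uIcc (-a) a,
        HasDerivAt (fun s : ℝ => Complex.log ((s:ℂ) - z)) (((lam:ℂ) - z)⁻¹ ^ 1) lam := by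
      intro lam _
      rw [pow_one]
      have h2 : HasDerivAt (fun w : ℂ => Complex.log (w - z)) ((lam:ℂ) - z)⁻¹ (lam:ℂ) := by
        simpa [Function.comp_def] using (Complex.hasDerivAt_log (hslit lam)).comp (lam:ℂ)
          ((hasDerivAt_id ((lam:ℂ))).sub_const z)
      exact h2.comp_ofReal
    rw [intervalIntegral.integral_eq_sub_of_hasDerivAt hF (umb_intable hz 1 a)]
    have hlogneg : Complex.log (((-a : ℝ):ℂ) - z) = Complex.log (z + (a:ℂ)) - Real.pi * Complex.I := by
      have him : 0 < (z + (a:ℂ)).im := by simp [Complex.add_im]; linarith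
      have : (((-a : ℝ):ℂ) - z) = -(z + (a:ℂ)) := by push_cast; ring
      rw [this]
      have habs : ‖-(z + (a:ℂ))‖ = ‖z + (a:ℂ)‖ := by
        exact norm_neg _
      apply Complex.ext
      · rw [Complex.log_re, Complex.sub_re, Complex.log_re, habs]
        simp
      · rw [Complex.log_im, Complex.sub_im, Complex.log_im,
          Complex.arg_neg_eq_arg_sub_pi_of_im_pos him]
        simp
    rw [hlogneg]
    unfold umbBt
    rw [if_pos rfl]
    have ha' : (2*(a:ℂ)) ≠ 0 := by
      simp [Complex.ofReal_ne_zero]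
      exact ne_of_gt ha
    field_simp
    ring
  · have hℓ2 : 2 ≤ ℓ := by omega
    have hℓne : ((ℓ:ℂ) - 1) ≠ 0 := by
      intro h
      have : (ℓ:ℂ) = 1 := by linear_combination h
      rw [show (1:ℂ) = ((1:ℕ):ℂ) by norm_num] at this
      exact h1 (Nat.cast_injective this)
    have h1ℓne : ((1:ℂ) - (ℓ:ℕ)) ≠ 0 := by
      intro h; apply hℓne; linear_combination -h
    have hF : ∀ lam ∈ Set.uIcc (-a) a,
        HasDerivAt (fun s : ℝ => ((s:ℂ) - z)^((1:ℤ) - (ℓ:ℤ)) / ((1:ℂ) - (ℓ:ℕ)))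
          (((lam:ℂ) - z)⁻¹ ^ ℓ) lam := by
      intro lam _
      have hne : ((lam:ℂ) - z) ≠ 0 := umb_ne' hz lam
      have h3 : HasDerivAt (fun w : ℂ => (w - z) ^ ((1:ℤ) - (ℓ:ℤ)))
          ((((1:ℤ) - (ℓ:ℤ) : ℤ):ℂ) * ((lam:ℂ) - z) ^ ((1:ℤ) - (ℓ:ℤ) - 1)) (lam:ℂ) := by
        have h2 := hasDerivAt_zpow ((1:ℤ) - (ℓ:ℤ)) ((lam:ℂ) - z) (Or.inl hne)
        simpa [Function.comp_def] using h2.comp (lam:ℂ) ((hasDerivAt_id ((lam:ℂ))).sub_const z)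
      have h4 := (h3.comp_ofReal).div_const ((1:ℂ) - (ℓ:ℕ))
      refine h4.congr_deriv ?_
      have e2 : (((1:ℤ) - (ℓ:ℤ) : ℤ) : ℂ) = (1:ℂ) - (ℓ:ℕ) := by push_cast; ring
      rw [e2, show (1:ℤ) - (ℓ:ℤ) - 1 = -(ℓ:ℤ) by ring, zpow_neg, zpow_natCast, ← inv_pow,
        mul_div_assoc]
      rw [mul_comm, div_mul_cancel₀ _ h1ℓne]
    rw [intervalIntegral.integral_eq_sub_of_hasDerivAt hF (umb_intable hz ℓ a)]
    unfold umbBt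
    rw [if_neg h1]
    have ha' : (2*(a:ℂ)) ≠ 0 := by
      simp [Complex.ofReal_ne_zero]
      exact ne_of_gt ha
    field_simp
    ring

lemma umb_tri (x y : ℂ) : ‖x - y‖ ≤ ‖x‖ + ‖y‖ := by
  rw [sub_eq_add_neg]
  refine (norm_add_le x (-y)).trans ?_
  rw [norm_neg]

lemma umb_arg_arctan {w : ℂ} (hw : 0 < w.re) : w.arg = Real.arctan (w.im / w.re) := by
  have h1 : |w.arg| < Real.pi/2 := Complex.abs_arg_lt_pi_div_two_iff.mpr (Or.inl hw)
  rw [abs_lt] at h1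
  rw [← Complex.tan_arg, Real.arctan_tan h1.1 h1.2]

lemma umb_bound2 (a δ : ℝ) (ha : 0 < a) (hδ1 : 1 ≤ δ) (hδa : δ ≤ a)
    (ℓ : ℕ) (hℓ : 2 ≤ ℓ) (z : ℂ)
    (h1 : δ ≤ ‖z - (a:ℂ)‖) (h2 : δ ≤ ‖z + (a:ℂ)‖) :
    ‖umbBt a ℓ z‖ ≤ (δ ^ ℓ)⁻¹ := by
  have hδ0 : (0:ℝ) < δ := by linarith
  obtain ⟨k, hk1, hℓk⟩ : ∃ k : ℕ, 1 ≤ k ∧ ℓ = k + 1 := ⟨ℓ - 1, by omega, by omega⟩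
  have hk0 : (0:ℝ) < (k:ℝ) := by exact_mod_cast Nat.pos_of_ne_zero (by omega)
  have hne1 : ℓ ≠ 1 := by omega
  have key : ∀ w : ℂ, δ ≤ ‖w‖ → ‖w ^ ((1:ℤ) - (ℓ:ℤ))‖ ≤ (δ^k)⁻¹ := by
    intro w hw
    rw [norm_zpow, show (1:ℤ) - (ℓ:ℤ) = -(k:ℤ) by rw [hℓk]; push_cast; ring,
      zpow_neg, zpow_natCast]
    have hp : δ^k ≤ (‖w‖)^k := pow_le_pow_left₀ hδ0.le hw k
    exact inv_anti₀ (by positivity) hp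
  have e1 : ‖(((-a:ℝ)):ℂ) - z‖ = ‖z + (a:ℂ)‖ := by
    rw [show (((-a:ℝ)):ℂ) - z = -(z + (a:ℂ)) by push_cast; ring]
    exact norm_neg _
  have e2 : ‖((a:ℝ):ℂ) - z‖ = ‖z - (a:ℂ)‖ := by
    rw [show ((a:ℝ):ℂ) - z = -(z - (a:ℂ)) by push_cast; ring]
    exact norm_neg _
  have hb1 : ‖(((-a:ℝ):ℂ) - z) ^ ((1:ℤ) - (ℓ:ℤ))‖ ≤ (δ^k)⁻¹ :=
    key _ (by rw [e1]; exact h2)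
  have hb2 : ‖(((a:ℝ):ℂ) - z) ^ ((1:ℤ) - (ℓ:ℤ))‖ ≤ (δ^k)⁻¹ :=
    key _ (by rw [e2]; exact h1)
  have habs2a : ‖2*(a:ℂ)‖ = 2*a := by
    rw [norm_mul, Complex.norm_two, Complex.norm_real, Real.norm_eq_abs, abs_of_pos ha]
  have habsl : ‖(ℓ:ℂ) - 1‖ = (k:ℝ) := by
    rw [show (ℓ:ℂ) - 1 = ((k:ℕ):ℂ) by rw [hℓk]; push_cast; ring, Complex.norm_natCast]
  unfold umbBt
  rw [if_neg hne1]
  refine le_trans (umb_tri _ _) ?_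
  rw [norm_div, norm_div, norm_mul, norm_mul, norm_inv, habs2a, habsl]
  have hstep : (2*a)⁻¹ * ‖(((-a:ℝ):ℂ) - z) ^ ((1:ℤ) - (ℓ:ℤ))‖ / (k:ℝ)
      + (2*a)⁻¹ * ‖(((a:ℝ):ℂ) - z) ^ ((1:ℤ) - (ℓ:ℤ))‖ / (k:ℝ)
      ≤ (2*a)⁻¹ * (δ^k)⁻¹ / (k:ℝ) + (2*a)⁻¹ * (δ^k)⁻¹ / (k:ℝ) := by
    gcongr
  refine hstep.trans ?_
  have heq : (2*a)⁻¹ * (δ^k)⁻¹ / (k:ℝ) + (2*a)⁻¹ * (δ^k)⁻¹ / (k:ℝ) = (δ^k)⁻¹ * (a*(k:ℝ))⁻¹ := by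
    field_simp
    ring
  rw [heq, hℓk]
  have hk1' : (1:ℝ) ≤ (k:ℝ) := by exact_mod_cast hk1
  have hlast : (a*(k:ℝ))⁻¹ ≤ δ⁻¹ := by
    apply inv_anti₀ hδ0
    nlinarith
  have hgoal : (δ ^ (k+1))⁻¹ = (δ^k)⁻¹ * δ⁻¹ := by rw [pow_succ, mul_inv]
  rw [hgoal]
  exact mul_le_mul_of_nonneg_left hlast (by positivity)

lemma umb_bound1 (a δ : ℝ) (ha : 0 < a) (hδ1 : 1 ≤ δ) (hδa : δ ≤ a)
    (hlog : δ * (Real.log δ + Real.pi) ≤ a) (z : ℂ) (hre : z.re ∈ Set.Ioo (-a) a)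
    (h1 : δ ≤ ‖z - (a:ℂ)‖) (h2 : δ ≤ ‖z + (a:ℂ)‖) :
    ‖umbBt a 1 z‖ ≤ δ⁻¹ := by
  obtain ⟨hre1, hre2⟩ := hre
  have hδ0 : (0:ℝ) < δ := by linarith
  have hπa : δ * Real.pi ≤ a := by
    have := Real.log_nonneg hδ1
    nlinarith
  have hπ0 := Real.pi_pos
  set t : ℝ := 2*a/δ with htdef
  have ht0 : 0 < t := by positivity
  have ht2π : 2*Real.pi ≤ t := by
    rw [htdef, le_div_iff₀ hδ0]; nlinarith
  set L : ℂ := Complex.log ((a:ℂ) - z) + Real.pi * Complex.I - Complex.log (z + (a:ℂ)) with hLdef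
  -- reduce to |L| ≤ t
  suffices hL : ‖L‖ ≤ t by
    unfold umbBt
    rw [if_pos rfl]
    rw [norm_mul, norm_inv, show ‖2*(a:ℂ)‖ = 2*a by
      rw [norm_mul, Complex.norm_two, Complex.norm_real, Real.norm_eq_abs, abs_of_pos ha]]
    calc (2*a)⁻¹ * ‖L‖ ≤ (2*a)⁻¹ * t := by gcongr
    _ = δ⁻¹ := by rw [htdef]; field_simp
  -- compute re and im
  have hre_L : L.re = Real.log (‖(a:ℂ) - z‖) - Real.log (‖z + (a:ℂ)‖) := by
    rw [hLdef]
    simp [Complex.sub_re, Complex.add_re, Complex.log_re, Complex.mul_re]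
  have him_L : L.im = Complex.arg ((a:ℂ) - z) + Real.pi - Complex.arg (z + (a:ℂ)) := by
    rw [hLdef]
    simp [Complex.sub_im, Complex.add_im, Complex.log_im, Complex.mul_im]
  -- reduce to squares
  suffices hsq : L.re^2 + L.im^2 ≤ t^2 by
    rw [Complex.norm_def, Complex.normSq_apply, show L.re * L.re + L.im * L.im
      = L.re^2 + L.im^2 by ring]
    calc Real.sqrt (L.re^2 + L.im^2) ≤ Real.sqrt (t^2) := Real.sqrt_le_sqrt hsq
    _ = t := Real.sqrt_sq ht0.le
  -- the two moduli
  have e2 : ‖(a:ℂ) - z‖ = ‖z - (a:ℂ)‖ := by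
    rw [show (a:ℂ) - z = -(z - (a:ℂ)) by ring]
    exact norm_neg _
  have hm1 : δ ≤ ‖(a:ℂ) - z‖ := by rw [e2]; exact h1
  have hm1' : (0:ℝ) < ‖(a:ℂ) - z‖ := lt_of_lt_of_le hδ0 hm1
  have hm2' : (0:ℝ) < ‖z + (a:ℂ)‖ := lt_of_lt_of_le hδ0 h2
  have hre_az : ((a:ℂ) - z).re = a - z.re := by simp
  have him_az : ((a:ℂ) - z).im = -z.im := by simp
  have hre_za : (z + (a:ℂ)).re = z.re + a := by simp
  have him_za : (z + (a:ℂ)).im = z.im := by simp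
  have hre_az0 : 0 < ((a:ℂ) - z).re := by rw [hre_az]; linarith
  have hre_za0 : 0 < (z + (a:ℂ)).re := by rw [hre_za]; linarith
  rcases le_or_gt 0 z.im with him | him
  · -- upper half / real case
    have hA1 : Complex.arg ((a:ℂ) - z) ≤ 0 := by
      rcases lt_or_eq_of_le him with him' | him'
      · exact (Complex.arg_neg_iff.mpr (by rw [him_az]; linarith)).le
      · have : ((a:ℂ) - z).im = 0 := by rw [him_az, ← him']; ring
        rw [Complex.arg_eq_zero_iff.mpr ⟨hre_az0.le, this⟩]
    have hA1' : -(Real.pi/2) < Complex.arg ((a:ℂ) - z) :=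
      Complex.neg_pi_div_two_lt_arg_iff.mpr (Or.inl hre_az0)
    have hA2 : 0 ≤ Complex.arg (z + (a:ℂ)) :=
      Complex.arg_nonneg_iff.mpr (by rw [him_za]; exact him)
    have hA2' : Complex.arg (z + (a:ℂ)) < Real.pi/2 :=
      Complex.arg_lt_pi_div_two_iff.mpr (Or.inl hre_za0)
    have him_sq : L.im^2 ≤ Real.pi^2 := by
      rw [him_L]
      apply sq_le_sq' <;> linarith
    have hre_sq : L.re^2 ≤ (Real.log (1+t))^2 := by
      have key : ∀ x y : ℂ, 0 < ‖x‖ → δ ≤ ‖y‖ →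
          ‖x‖ ≤ ‖y‖ + 2*a →
          Real.log (‖x‖) ≤ Real.log (‖y‖) + Real.log (1+t) := by
        intro x y hx0 hy hxy
        have hy0 : (0:ℝ) < ‖y‖ := lt_of_lt_of_le hδ0 hy
        have hxyt : ‖x‖ ≤ ‖y‖ * (1+t) := by
          have h2a : 2*a = δ * t := by rw [htdef]; field_simp
          nlinarith
        calc Real.log (‖x‖) ≤ Real.log (‖y‖ * (1+t)) :=
          Real.log_le_log hx0 hxyt
        _ = Real.log (‖y‖) + Real.log (1+t) := Real.log_mul hy0.ne' (by linarith)
      have k1 : ‖(a:ℂ) - z‖ ≤ ‖z + (a:ℂ)‖ + 2*a := by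
        have : (a:ℂ) - z = ((2*a:ℝ):ℂ) - (z + (a:ℂ)) := by push_cast; ring
        rw [this]
        refine (umb_tri _ _).trans ?_
        rw [Complex.norm_real, Real.norm_eq_abs, abs_of_pos (by linarith)]
        linarith [norm_nonneg (z + (a:ℂ))]
      have k2 : ‖z + (a:ℂ)‖ ≤ ‖(a:ℂ) - z‖ + 2*a := by
        have : z + (a:ℂ) = ((2*a:ℝ):ℂ) - ((a:ℂ) - z) := by push_cast; ring
        rw [this]
        refine (umb_tri _ _).trans ?_
        rw [Complex.norm_real, Real.norm_eq_abs, abs_of_pos (by linarith)]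
        linarith [norm_nonneg ((a:ℂ) - z)]
      have b1 := key _ _ hm1' h2 k1
      have b2 := key _ _ hm2' hm1 k2
      have hlog1t : 0 ≤ Real.log (1+t) := Real.log_nonneg (by linarith)
      rw [hre_L]
      apply sq_le_sq' <;> linarith
    have := umb_case1 ht2π
    linarith
  · -- lower strip case
    set u : ℝ := a - z.re with hudef
    set u' : ℝ := z.re + a with hu'def
    set v : ℝ := -z.im with hvdef
    have hu0 : 0 < u := by rw [hudef]; linarith
    have hu'0 : 0 < u' := by rw [hu'def]; linarith
    have hv0 : 0 < v := by rw [hvdef]; linarith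
    have hsum : u + u' = 2*a := by rw [hudef, hu'def]; ring
    have habs1 : ‖(a:ℂ) - z‖ = Real.sqrt (u^2 + v^2) := by
      rw [Complex.norm_def, Complex.normSq_apply, hre_az, him_az]
      congr 1
      rw [hudef, hvdef]; ring
    have habs2 : ‖z + (a:ℂ)‖ = Real.sqrt (u'^2 + v^2) := by
      rw [Complex.norm_def, Complex.normSq_apply, hre_za, him_za]
      congr 1
      rw [hu'def, hvdef]; ring
    have hA1 : Complex.arg ((a:ℂ) - z) = Real.arctan (v/u) := by
      rw [umb_arg_arctan hre_az0, hre_az, him_az, hudef, hvdef]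
    have hA2 : Complex.arg (z + (a:ℂ)) = -Real.arctan (v/u') := by
      rw [umb_arg_arctan hre_za0, hre_za, him_za, hu'def, hvdef]
      rw [show z.im / (z.re + a) = -((-z.im)/(z.re + a)) by ring, Real.arctan_neg]
    have hre_L' : L.re = (Real.log (u^2+v^2) - Real.log (u'^2+v^2))/2 := by
      rw [hre_L, habs1, habs2, Real.log_sqrt (by positivity), Real.log_sqrt (by positivity)]
      ring
    have him_L' : L.im = Real.pi + Real.arctan (v/u) + Real.arctan (v/u') := by
      rw [him_L, hA1, hA2]; ring
    rcases le_total u u' with huu | huu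
    · have hm : δ ≤ Real.sqrt (u^2+v^2) := by rw [← habs1]; exact hm1
      have hcore := umb_core_neg ha hδ1 hu0 huu hv0 hsum hm hπa
      rw [hre_L', him_L']
      rw [show ((Real.log (u^2+v^2) - Real.log (u'^2+v^2))/2)^2
        = ((Real.log (u'^2+v^2) - Real.log (u^2+v^2))/2)^2 by ring]
      calc _ ≤ (2*a/δ)^2 := hcore
      _ = t^2 := by rw [htdef]
    · have hm : δ ≤ Real.sqrt (u'^2+v^2) := by rw [← habs2]; exact h2
      have hcore := umb_core_neg ha hδ1 hu'0 huu hv0 (by linarith) hm hπa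
      rw [hre_L', him_L']
      rw [show Real.pi + Real.arctan (v/u) + Real.arctan (v/u')
        = Real.pi + Real.arctan (v/u') + Real.arctan (v/u) by ring]
      calc _ ≤ (2*a/δ)^2 := hcore
      _ = t^2 := by rw [htdef]


/-- **Uniform-distribution bound on the continued moments.** For `a > 0` and `ℓ ≥ 1`, the
function `B_ℓ(z) = (1/(2a)) ∫_{-a}^a (λ-z)^{-ℓ} dλ` (`Im z > 0`) extends holomorphically to
`ℂ₊ ∪ {Re z ∈ (-a,a)}`; moreover if `1 ≤ δ ≤ a` and `δ(log δ + π) ≤ a`, then the extension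
satisfies `|B̃_ℓ(z)| ≤ δ^{-ℓ}` for all `ℓ ≥ 1` and all `z` with `Re z ∈ (-a,a)`,
`|z - a| ≥ δ` and `|z + a| ≥ δ`. -/
theorem uniform_moment_bound (a : ℝ) (ha : 0 < a) :
    ∃ Bt : ℕ → ℂ → ℂ,
      (∀ ℓ : ℕ, 1 ≤ ℓ →
        DifferentiableOn ℂ (Bt ℓ)
          ({z : ℂ | 0 < z.im} ∪ {z : ℂ | z.re ∈ Set.Ioo (-a) a}) ∧
        ∀ z : ℂ, 0 < z.im →
          Bt ℓ z = (1 / (2 * (a : ℂ))) * ∫ lam in (-a)..a, ((lam : ℂ) - z)⁻¹ ^ ℓ) ∧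
      ∀ δ : ℝ, 1 ≤ δ → δ ≤ a → δ * (Real.log δ + Real.pi) ≤ a →
        ∀ ℓ : ℕ, 1 ≤ ℓ → ∀ z : ℂ, z.re ∈ Set.Ioo (-a) a →
          δ ≤ ‖z - (a : ℂ)‖ → δ ≤ ‖z + (a : ℂ)‖ →
          ‖Bt ℓ z‖ ≤ (δ ^ ℓ)⁻¹ := by
  refine ⟨umbBt a, fun ℓ hℓ => ⟨umb_diff a ha ℓ hℓ, fun z hz => umb_int a ha ℓ hℓ z hz⟩, ?_⟩
  intro δ hδ1 hδa hlog ℓ hℓ z hre hz1 hz2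
  rcases eq_or_lt_of_le hℓ with h1 | h2
  · rw [← h1, pow_one]
    exact umb_bound1 a δ ha hδ1 hδa hlog z hre hz1 hz2
  · exact umb_bound2 a δ ha hδ1 hδa ℓ h2 z hz1 hz2
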